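/- Let G be a finitely generated group such that Φ_F(G) has finite index in G. If H is a subgroup of G which is dense for the profinite topology on G, then H contains a finitely generated subgroup which is also dense in G for the profinite topology. -/

import Mathlib

/-- Vertices of the rooted regular tree over alphabet `A`: finite words in `A`. -/
abbrev Vert (A : Type*) := List A

/-- The automorphism group of the rooted regular tree with vertex set `Vert A`:
length-preserving permutations of the vertices that preserve the prefix order. -/
def treeAut (A : Type*) : Subgroup (Equiv.Perm (Vert A)) where
  carrier := { g | (∀ v : Vert A, (g v).length = v.length) ∧
    ∀ v w : Vert A, v <+: w ↔ g v <+: g w }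
  one_mem' := ⟨fun _ => rfl, fun _ _ => Iff.rfl⟩
  mul_mem' := by
    rintro g h ⟨hg1, hg2⟩ ⟨hh1, hh2⟩
    refine ⟨fun v => ?_, fun v w => ?_⟩
    · simp only [Equiv.Perm.mul_apply, hg1, hh1]
    · simpa only [Equiv.Perm.mul_apply] using (hh2 v w).trans (hg2 (h v) (h w))
  inv_mem' := by
    rintro g ⟨hg1, hg2⟩
    refine ⟨fun v => ?_, fun v w => ?_⟩
    · have h1 := hg1 (g⁻¹ v)
      rw [Equiv.Perm.inv_def, Equiv.apply_symm_apply] at h1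
      exact h1.symm
    · have h2 := hg2 (g⁻¹ v) (g⁻¹ w)
      rw [Equiv.Perm.inv_def, Equiv.apply_symm_apply, Equiv.apply_symm_apply] at h2
      exact h2.symm

open scoped Classical in
/-- The section `φ_v(g)` of an automorphism `g` at the vertex `v`: the unique
permutation `s` with `g (v ++ w) = g v ++ s w` for all `w` (it exists and is unique
whenever `g` is a tree automorphism). -/
noncomputable def sect {A : Type*} (g : Equiv.Perm (Vert A)) (v : Vert A) :
    Equiv.Perm (Vert A) :=
  if h : ∃ s : Equiv.Perm (Vert A), ∀ w : Vert A, g (v ++ w) = g v ++ s w then h.choose else 1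

/-- The `n`-th level of the tree: words of length `n`. -/
def level (A : Type*) (n : ℕ) : Set (Vert A) := { v | v.length = n }

/-- The pointwise stabilizer in `G` of a set `S` of vertices. -/
def stabSet {A : Type*} (G : Subgroup (Equiv.Perm (Vert A))) (S : Set (Vert A)) :
    Subgroup (Equiv.Perm (Vert A)) where
  carrier := { g | g ∈ G ∧ ∀ v ∈ S, g v = v }
  one_mem' := ⟨G.one_mem, fun _ _ => rfl⟩
  mul_mem' := by
    rintro g h ⟨hg, hg2⟩ ⟨hh, hh2⟩
    exact ⟨G.mul_mem hg hh, fun v hv => by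
      simp only [Equiv.Perm.mul_apply, hh2 v hv, hg2 v hv]⟩
  inv_mem' := by
    rintro g ⟨hg, hg2⟩
    refine ⟨G.inv_mem hg, fun v hv => ?_⟩
    conv_lhs => rw [← hg2 v hv]
    exact g.symm_apply_apply v

/-- The stabilizer in `G` of a single vertex `v`. -/
def vstab {A : Type*} (G : Subgroup (Equiv.Perm (Vert A))) (v : Vert A) :
    Subgroup (Equiv.Perm (Vert A)) := stabSet G {v}

/-- The pointwise stabilizer in `G` of the `n`-th level. -/
def lstab {A : Type*} (G : Subgroup (Equiv.Perm (Vert A))) (n : ℕ) :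
    Subgroup (Equiv.Perm (Vert A)) := stabSet G (level A n)

/-- The rigid stabilizer of a vertex `v` in `G`: elements of `G` acting trivially
outside the subtree rooted at `v`. -/
def rist {A : Type*} (G : Subgroup (Equiv.Perm (Vert A))) (v : Vert A) :
    Subgroup (Equiv.Perm (Vert A)) where
  carrier := { g | g ∈ G ∧ ∀ w : Vert A, ¬ v <+: w → g w = w }
  one_mem' := ⟨G.one_mem, fun _ _ => rfl⟩
  mul_mem' := by
    rintro g h ⟨hg, hg2⟩ ⟨hh, hh2⟩
    exact ⟨G.mul_mem hg hh, fun w hw => by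
      simp only [Equiv.Perm.mul_apply, hh2 w hw, hg2 w hw]⟩
  inv_mem' := by
    rintro g ⟨hg, hg2⟩
    refine ⟨G.inv_mem hg, fun w hw => ?_⟩
    conv_lhs => rw [← hg2 w hw]
    exact g.symm_apply_apply w

/-- The rigid stabilizer of the `n`-th level: the subgroup generated by the rigid
stabilizers of the vertices of level `n`. -/
def ristLevel {A : Type*} (G : Subgroup (Equiv.Perm (Vert A))) (n : ℕ) :
    Subgroup (Equiv.Perm (Vert A)) := ⨆ v ∈ level A n, rist G v

/-- The subgroup `φ_v(H)` generated by (equivalently, consisting of, when `H`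
stabilizes `v`) the sections at `v` of the elements of `H`. -/
def sectGrp {A : Type*} (H : Subgroup (Equiv.Perm (Vert A))) (v : Vert A) :
    Subgroup (Equiv.Perm (Vert A)) :=
  Subgroup.closure ((fun g => sect g v) '' (H : Set (Equiv.Perm (Vert A))))

/-- A transversal of the tree: a finite set of vertices met exactly once by every
infinite ray from the root. -/
def IsTransversal (A : Type*) (X : Set (Vert A)) : Prop :=
  X.Finite ∧ ∀ ω : ℕ → A, ∃! n : ℕ, (List.ofFn fun i : Fin n => ω i.val) ∈ X

/-- The subgroup induction property. -/
def HasSGIP {A : Type*} (G : Subgroup (Equiv.Perm (Vert A))) : Prop :=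
  ∀ H : Subgroup (Equiv.Perm (Vert A)), H ≤ G → H.FG →
    ∃ X : Set (Vert A), IsTransversal A X ∧ ∀ v ∈ X,
      sectGrp (stabSet H X) v = ⊥ ∨
      (sectGrp (stabSet H X) v).relIndex (sectGrp (vstab G v) v) ≠ 0

/-- `G` acts transitively on every level of the tree. -/
def LevelTransitive {A : Type*} (G : Subgroup (Equiv.Perm (Vert A))) : Prop :=
  ∀ v w : Vert A, v.length = w.length → ∃ g ∈ G, g v = w

/-- Weakly branch: level-transitive with all rigid vertex stabilizers infinite. -/
def IsWeaklyBranch {A : Type*} (G : Subgroup (Equiv.Perm (Vert A))) : Prop :=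
  LevelTransitive G ∧ ∀ v : Vert A, (rist G v : Set (Equiv.Perm (Vert A))).Infinite

/-- Branch: weakly branch and every level rigid stabilizer has finite index in `G`. -/
def IsBranch {A : Type*} (G : Subgroup (Equiv.Perm (Vert A))) : Prop :=
  IsWeaklyBranch G ∧ ∀ n : ℕ, (ristLevel G n).relIndex G ≠ 0

/-- Self-similar: all sections of vertex stabilizers land in `G`. -/
def SelfSimilar {A : Type*} (G : Subgroup (Equiv.Perm (Vert A))) : Prop :=
  ∀ v : Vert A, sectGrp (vstab G v) v ≤ G

/-- Self-replicating: `φ_v(Stab_G(v)) = G` for every vertex `v`. -/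
def SelfReplicating {A : Type*} (G : Subgroup (Equiv.Perm (Vert A))) : Prop :=
  ∀ v : Vert A, sectGrp (vstab G v) v = G

/-- Strongly self-replicating: self-similar and `φ_v(Stab_G(L_n)) = G` for every `n`
and every vertex `v` of level `n`. -/
def StronglySelfReplicating {A : Type*} (G : Subgroup (Equiv.Perm (Vert A))) : Prop :=
  SelfSimilar G ∧ ∀ (n : ℕ) (v : Vert A), v.length = n → sectGrp (lstab G n) v = G

/-- The congruence subgroup property: every finite-index subgroup of `G` contains
some level stabilizer. -/
def HasCSP {A : Type*} (G : Subgroup (Equiv.Perm (Vert A))) : Prop :=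
  ∀ K : Subgroup (Equiv.Perm (Vert A)), K ≤ G → K.relIndex G ≠ 0 →
    ∃ n : ℕ, lstab G n ≤ K

/-- A group is just infinite if it is infinite and all its proper quotients are
finite, i.e. every nontrivial normal subgroup has finite index. -/
def JustInfinite (G : Type*) [Group G] : Prop :=
  Infinite G ∧ ∀ N : Subgroup G, N.Normal → N ≠ ⊥ → N.index ≠ 0

/-- `Φ_F(G)`: the intersection of all maximal subgroups of finite index of `G`. -/
def PhiF (G : Type*) [Group G] : Subgroup G :=
  ⨅ M ∈ { M : Subgroup G | IsCoatom M ∧ M.index ≠ 0 }, M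

/-- Two groups are commensurable if they have isomorphic finite-index subgroups. -/
def CommGroups (G₁ : Type*) (G₂ : Type*) [Group G₁] [Group G₂] : Prop :=
  ∃ (H₁ : Subgroup G₁) (H₂ : Subgroup G₂),
    H₁.index ≠ 0 ∧ H₂.index ≠ 0 ∧ Nonempty (H₁ ≃* H₂)

open scoped Pointwise

private theorem exists_coatom_aux {G : Type*} [Group G] :
    ∀ n : ℕ, ∀ P : Subgroup G, P.index = n → P ≠ ⊤ → P.index ≠ 0 →
      ∃ M : Subgroup G, P ≤ M ∧ IsCoatom M ∧ M.index ≠ 0 := by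
  intro n
  induction n using Nat.strong_induction_on with
  | _ n ih =>
    intro P hPn hPtop hPind
    by_cases hc : IsCoatom P
    · exact ⟨P, le_rfl, hc, hPind⟩
    · rw [IsCoatom] at hc
      push_neg at hc
      obtain ⟨B, hPB, hBtop⟩ := hc hPtop
      have hle : P ≤ B := hPB.le
      have hdvd : B.index ∣ P.index := Subgroup.index_dvd_of_le hle
      have hBind : B.index ≠ 0 := fun h => hPind (by
        have := Subgroup.relIndex_mul_index hle
        rw [h, mul_zero] at this; omega)
      have hrel : P.relIndex B ≠ 1 := fun h =>
        (lt_irrefl P) (hPB.trans_le (Subgroup.relIndex_eq_one.mp h))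
      have hrel0 : P.relIndex B ≠ 0 := fun h => hPind (by
        have := Subgroup.relIndex_mul_index hle
        rw [h, zero_mul] at this; omega)
      have hlt : B.index < P.index := by
        have heq := Subgroup.relIndex_mul_index hle
        have h2 : 2 ≤ P.relIndex B := by omega
        calc B.index < 2 * B.index := by omega
          _ ≤ P.relIndex B * B.index := Nat.mul_le_mul_right _ h2
          _ = P.index := heq
      obtain ⟨M, hBM, hM⟩ := ih B.index (hPn ▸ hlt) B rfl hBtop hBind
      exact ⟨M, hle.trans hBM, hM⟩

/-- Lemma 3.6: in a finitely generated group `G` with `Φ_F(G)` of finite index,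
every subgroup dense for the profinite topology contains a finitely generated
subgroup which is still dense. -/
theorem statement6 (G : Type*) [Group G] (hfg : Group.FG G)
    (hphi : (PhiF G).index ≠ 0) (H : Subgroup G)
    (hdense : ∀ N : Subgroup G, N.Normal → N.index ≠ 0 →
      ∀ g : G, ∃ h ∈ H, ∃ n ∈ N, g = h * n) :
    ∃ K : Subgroup G, K ≤ H ∧ K.FG ∧
      ∀ N : Subgroup G, N.Normal → N.index ≠ 0 →
        ∀ g : G, ∃ k ∈ K, ∃ n ∈ N, g = k * n := by
  classical
  -- the normal core of `PhiF G` has finite index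
  haveI : (PhiF G).FiniteIndex := ⟨hphi⟩
  set N₀ : Subgroup G := (PhiF G).normalCore with hN₀
  haveI : N₀.FiniteIndex := Subgroup.finiteIndex_normalCore _
  -- the set of finite-index maximal subgroups
  set S : Set (Subgroup G) := { M : Subgroup G | IsCoatom M ∧ M.index ≠ 0 } with hS
  -- every member of S contains N₀
  have hN₀le : ∀ M ∈ S, N₀ ≤ M := fun M hM =>
    (Subgroup.normalCore_le _).trans (iInf₂_le M hM)
  -- S is finite
  have hSfin : S.Finite := by
    haveI : Finite (G ⧸ N₀) := Subgroup.finite_quotient_of_finiteIndex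
    haveI : Finite (Subgroup (G ⧸ N₀)) :=
      Finite.of_injective (fun M => (M : Set (G ⧸ N₀))) SetLike.coe_injective
    apply Set.Finite.of_finite_image (f := fun M : Subgroup G =>
      Subgroup.map (QuotientGroup.mk' N₀) M) (Set.toFinite _)
    intro M₁ h₁ M₂ h₂ heq
    have e1 : Subgroup.comap (QuotientGroup.mk' N₀) (Subgroup.map (QuotientGroup.mk' N₀) M₁)
        = Subgroup.comap (QuotientGroup.mk' N₀) (Subgroup.map (QuotientGroup.mk' N₀) M₂) := by
      simp only at heq
      rw [heq]
    rwa [Subgroup.comap_map_eq, Subgroup.comap_map_eq, QuotientGroup.ker_mk',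
      sup_eq_left.mpr (hN₀le M₁ h₁), sup_eq_left.mpr (hN₀le M₂ h₂)] at e1
  -- for each M ∈ S, pick an element of H not in M
  have hpick : ∀ M ∈ S, ∃ h : G, h ∈ H ∧ h ∉ M := by
    rintro M ⟨hMco, hMind⟩
    haveI : M.FiniteIndex := ⟨hMind⟩
    obtain ⟨g, hg⟩ : ∃ g : G, g ∉ M := by
      by_contra hcon
      push_neg at hcon
      exact hMco.1 (Subgroup.eq_top_iff' M |>.mpr hcon)
    obtain ⟨h, hh, n, hn, hgn⟩ := hdense M.normalCore (Subgroup.normalCore_normal M)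
      Subgroup.FiniteIndex.index_ne_zero g
    refine ⟨h, hh, fun hhM => hg ?_⟩
    rw [hgn]
    exact M.mul_mem hhM (Subgroup.normalCore_le M hn)
  choose! f hf1 hf2 using hpick
  set T : Set G := f '' S with hT
  have hTfin : T.Finite := hSfin.image f
  refine ⟨Subgroup.closure T, ?_, ?_, ?_⟩
  · rw [Subgroup.closure_le]
    rintro x ⟨M, hM, rfl⟩
    exact hf1 M hM
  · exact (Subgroup.fg_iff _).mpr ⟨T, rfl, hTfin⟩
  · intro N hNnorm hNind g
    haveI : N.Normal := hNnorm
    have htop : Subgroup.closure T ⊔ N = ⊤ := by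
      by_contra hne
      have hind : (Subgroup.closure T ⊔ N).index ≠ 0 := fun h0 => hNind <|
        Nat.eq_zero_of_zero_dvd (h0 ▸ Subgroup.index_dvd_of_le le_sup_right)
      obtain ⟨M, hleM, hMco, hMind⟩ := exists_coatom_aux _ (Subgroup.closure T ⊔ N) rfl hne hind
      have hMS : M ∈ S := ⟨hMco, hMind⟩
      have : f M ∈ M := hleM <| le_sup_left (a := Subgroup.closure T) <|
        Subgroup.subset_closure ⟨M, hMS, rfl⟩
      exact hf2 M hMS this
    have hg : g ∈ ((Subgroup.closure T : Set G) * (N : Set G)) := by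
      rw [← Subgroup.mul_normal, htop]; trivial
    obtain ⟨k, hk, n, hn, rfl⟩ := hg
    exact ⟨k, hk, n, hn, rfl⟩
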